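/- Let D : V → V → Prop be an irreflexive relation on a finite nonempty type V such that every vertex is a source (no arc of D enters it) or a sink (no arc of D leaves it), and every vertex is incident with at least one arc. Let S be the set of sources and T the set of sinks, and let b : V → ℕ. Then there exists a perfect b-matching if and only if ∑_{s ∈ S} b s = ∑_{t ∈ T} b t and, for every dicut shore U, ∑_{s ∈ U ∩ S} b s ≥ ∑_{t ∈ U ∩ T} b t. -/

import Mathlib

open Finset

variable {V : Type*} [Fintype V] [DecidableEq V]

lemma aux_sigma_card (c : V → ℕ) (N : Finset V) :
    (univ.filter (fun p : Σ v : V, Fin (c v) => p.1 ∈ N)).card = ∑ v ∈ N, c v := by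
  have h : univ.filter (fun p : Σ v : V, Fin (c v) => p.1 ∈ N)
      = N.sigma (fun v => (univ : Finset (Fin (c v)))) := by
    ext p; simp [Finset.mem_sigma]
  rw [h, Finset.card_sigma]; simp

/-- source capacity -/
def bsf (D : V → V → Prop) [DecidableRel D] (b : V → ℕ) (v : V) : ℕ :=
  if (∀ u, ¬ D u v) then b v else 0

/-- sink capacity -/
def btf (D : V → V → Prop) [DecidableRel D] (b : V → ℕ) (v : V) : ℕ :=
  if (∀ u, ¬ D v u) then b v else 0

/-- `U` is the shore of a dicut of the digraph `D`: a nonempty proper vertex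
subset with no arc of `D` entering it. -/
def IsDicutShore (D : V → V → Prop) (U : Finset V) : Prop :=
  U.Nonempty ∧ U ≠ Finset.univ ∧ ∀ v ∉ U, ∀ u ∈ U, ¬ D v u

/-- Characterization of the existence of a perfect `b`-matching in a bipartite digraph
in terms of dicuts. -/
theorem stmt_8 [Nonempty V] (D : V → V → Prop) [DecidableRel D]
    (hirr : ∀ v, ¬ D v v)
    (hbip : ∀ v : V, (∀ u, ¬ D u v) ∨ (∀ u, ¬ D v u))
    (hdeg : ∀ v : V, ∃ u, D u v ∨ D v u)
    (b : V → ℕ) :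
    (∃ x : V → V → ℕ, (∀ u v, ¬ D u v → x u v = 0) ∧
        ∀ v : V, ∑ u, (x u v + x v u) = b v) ↔
      ((∑ s ∈ Finset.univ.filter fun v => ∀ u, ¬ D u v, b s)
          = (∑ t ∈ Finset.univ.filter fun v => ∀ u, ¬ D v u, b t) ∧
        ∀ U : Finset V, IsDicutShore D U →
          (∑ t ∈ U.filter fun v => ∀ u, ¬ D v u, b t)
            ≤ (∑ s ∈ U.filter fun v => ∀ u, ¬ D u v, b s)) := by
  have hnotboth : ∀ v : V, ¬ ((∀ u, ¬ D u v) ∧ (∀ u, ¬ D v u)) := by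
    rintro v ⟨h1, h2⟩
    obtain ⟨u, hu | hu⟩ := hdeg v
    · exact h1 u hu
    · exact h2 u hu
  have hsrc : ∀ {u v}, D u v → (∀ w, ¬ D w u) := by
    intro u v huv
    rcases hbip u with h | h
    · exact h
    · exact absurd huv (h v)
  have hsink : ∀ {u v}, D u v → (∀ w, ¬ D v w) := by
    intro u v huv
    rcases hbip v with h | h
    · exact absurd huv (h u)
    · exact h
  constructor
  · rintro ⟨x, hx0, hxd⟩
    have hS : ∀ v : V, (∀ u, ¬ D u v) → b v = ∑ u, x v u := by
      intro v hv
      rw [← hxd v]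
      refine Finset.sum_congr rfl fun u _ => ?_
      rw [hx0 u v (hv u), zero_add]
    have hT : ∀ v : V, (∀ u, ¬ D v u) → b v = ∑ u, x u v := by
      intro v hv
      rw [← hxd v]
      refine Finset.sum_congr rfl fun u _ => ?_
      rw [hx0 v u (hv u), add_zero]
    constructor
    · calc (∑ s ∈ Finset.univ.filter fun v => ∀ u, ¬ D u v, b s)
          = ∑ s ∈ Finset.univ.filter fun v => ∀ u, ¬ D u v, ∑ u, x s u :=
            Finset.sum_congr rfl fun s hs => hS s (Finset.mem_filter.mp hs).2
        _ = ∑ s, ∑ u, x s u := by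
            apply Finset.sum_subset (Finset.subset_univ _)
            intro s _ hs
            simp only [Finset.mem_filter, Finset.mem_univ, true_and] at hs
            push_neg at hs
            obtain ⟨u, hu⟩ := hs
            exact Finset.sum_eq_zero fun w _ => hx0 s w (hsink hu w)
        _ = ∑ u, ∑ s, x s u := Finset.sum_comm
        _ = ∑ t ∈ Finset.univ.filter fun v => ∀ u, ¬ D v u, ∑ u, x u t := by
            symm
            apply Finset.sum_subset (Finset.subset_univ _)
            intro t _ ht
            simp only [Finset.mem_filter, Finset.mem_univ, true_and] at ht
            push_neg at ht
            obtain ⟨u, hu⟩ := ht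
            exact Finset.sum_eq_zero fun w _ => hx0 w t (hsrc hu w)
        _ = ∑ t ∈ Finset.univ.filter fun v => ∀ u, ¬ D v u, b t :=
            (Finset.sum_congr rfl fun t ht => hT t (Finset.mem_filter.mp ht).2).symm
    · intro U hU
      obtain ⟨hUne, hUuniv, hshore⟩ := hU
      have key : ∀ t ∈ U.filter fun v => ∀ u, ¬ D v u,
          ∑ u, x u t = ∑ u ∈ U.filter fun v => ∀ u, ¬ D u v, x u t := by
        intro t ht
        rw [Finset.mem_filter] at ht
        symm
        apply Finset.sum_subset (Finset.subset_univ _)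
        intro u _ hu
        by_contra hxne
        have hD : D u t := by
          by_contra h; exact hxne (hx0 u t h)
        have huU : u ∈ U := by
          by_contra hnu; exact hshore u hnu t ht.1 hD
        exact hu (Finset.mem_filter.mpr ⟨huU, hsrc hD⟩)
      calc (∑ t ∈ U.filter fun v => ∀ u, ¬ D v u, b t)
          = ∑ t ∈ U.filter fun v => ∀ u, ¬ D v u,
              ∑ u ∈ U.filter fun v => ∀ u, ¬ D u v, x u t := by
            refine Finset.sum_congr rfl fun t ht => ?_
            rw [hT t (Finset.mem_filter.mp ht).2, key t ht]
        _ = ∑ u ∈ U.filter fun v => ∀ u, ¬ D u v,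
              ∑ t ∈ U.filter fun v => ∀ u, ¬ D v u, x u t := Finset.sum_comm
        _ ≤ ∑ u ∈ U.filter fun v => ∀ u, ¬ D u v, ∑ t, x u t :=
            Finset.sum_le_sum fun u _ =>
              Finset.sum_le_sum_of_subset (Finset.subset_univ _)
        _ = ∑ s ∈ U.filter fun v => ∀ u, ¬ D u v, b s :=
            Finset.sum_congr rfl fun u hu => (hS u (Finset.mem_filter.mp hu).2).symm
  · rintro ⟨heq, hcut⟩
    let nbr : (Σ v : V, Fin (btf D b v)) → Finset (Σ v : V, Fin (bsf D b v)) :=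
      fun q => univ.filter (fun p => D p.1 q.1)
    have hall : ∀ A : Finset (Σ v : V, Fin (btf D b v)), A.card ≤ (A.biUnion nbr).card := by
      intro A
      rcases A.eq_empty_or_nonempty with rfl | hAne
      · simp
      set B := A.image Sigma.fst with hB
      have hBsink : ∀ v ∈ B, (∀ u, ¬ D v u) := by
        intro v hv
        rw [hB, Finset.mem_image] at hv
        obtain ⟨q, hq, rfl⟩ := hv
        by_contra h
        have h0 : btf D b q.1 = 0 := if_neg h
        have h1 := q.2.isLt
        omega
      set N := univ.filter (fun s => ∃ v ∈ B, D s v) with hN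
      have hNsrc : ∀ s ∈ N, (∀ u, ¬ D u s) := by
        intro s hs
        rw [hN, Finset.mem_filter] at hs
        obtain ⟨-, v, hv, hDsv⟩ := hs
        rcases hbip s with h | h
        · exact h
        · exact absurd hDsv (h v)
      have hbiU : A.biUnion nbr = univ.filter (fun p : Σ v : V, Fin (bsf D b v) => p.1 ∈ N) := by
        ext p
        simp only [Finset.mem_biUnion, Finset.mem_filter, Finset.mem_univ, true_and, nbr,
          hN, hB, Finset.mem_image]
        constructor
        · rintro ⟨q, hq, hD⟩; exact ⟨q.1, ⟨q, hq, rfl⟩, hD⟩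
        · rintro ⟨v, ⟨q, hq, rfl⟩, hD⟩; exact ⟨q, hq, hD⟩
      rw [hbiU, aux_sigma_card]
      have hA : A.card ≤ ∑ v ∈ B, b v := by
        calc A.card ≤ (univ.filter (fun p : Σ v : V, Fin (btf D b v) => p.1 ∈ B)).card := by
              apply Finset.card_le_card
              intro q hq
              simp only [Finset.mem_filter, Finset.mem_univ, true_and]
              exact Finset.mem_image_of_mem _ hq
          _ = ∑ v ∈ B, btf D b v := aux_sigma_card (btf D b) B
          _ = ∑ v ∈ B, b v := Finset.sum_congr rfl fun v hv => if_pos (hBsink v hv)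
      have hBU : (B ∪ N).filter (fun v => ∀ u, ¬ D v u) = B := by
        ext v
        simp only [Finset.mem_filter, Finset.mem_union]
        constructor
        · rintro ⟨hv | hv, hsk⟩
          · exact hv
          · exact absurd ⟨hNsrc v hv, hsk⟩ (hnotboth v)
        · intro hv; exact ⟨Or.inl hv, hBsink v hv⟩
      have hNU : (B ∪ N).filter (fun v => ∀ u, ¬ D u v) = N := by
        ext v
        simp only [Finset.mem_filter, Finset.mem_union]
        constructor
        · rintro ⟨hv | hv, hsc⟩
          · exact absurd ⟨hsc, hBsink v hv⟩ (hnotboth v)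
          · exact hv
        · intro hv; exact ⟨Or.inr hv, hNsrc v hv⟩
      have hNB : ∑ v ∈ B, b v ≤ ∑ v ∈ N, b v := by
        by_cases hUuniv : B ∪ N = univ
        · rw [hUuniv] at hBU hNU
          rw [← hBU, ← hNU]
          exact heq.ge
        · have hsh : IsDicutShore D (B ∪ N) := by
            refine ⟨?_, hUuniv, ?_⟩
            · obtain ⟨q, hq⟩ := hAne
              exact ⟨q.1, Finset.mem_union_left _ (Finset.mem_image_of_mem _ hq)⟩
            · intro v hv u hu hD
              rcases Finset.mem_union.mp hu with hu | hu
              · exact hv (Finset.mem_union_right _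
                  (Finset.mem_filter.mpr ⟨Finset.mem_univ v, u, hu, hD⟩))
              · exact hNsrc u hu v hD
          have h := hcut _ hsh
          rw [hBU, hNU] at h
          exact h
      have hNs : ∑ v ∈ N, b v = ∑ v ∈ N, bsf D b v :=
        Finset.sum_congr rfl fun v hv => (if_pos (hNsrc v hv)).symm
      exact le_trans hA (le_trans hNB hNs.le)
    obtain ⟨f, hfinj, hfmem⟩ :=
      (Finset.all_card_le_biUnion_card_iff_exists_injective nbr).mp hall
    have hfD : ∀ q, D (f q).1 q.1 := by
      intro q
      have h := hfmem q
      simp only [nbr, Finset.mem_filter, Finset.mem_univ, true_and] at h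
      exact h
    have hcardι : Fintype.card (Σ v : V, Fin (btf D b v))
        = Fintype.card (Σ v : V, Fin (bsf D b v)) := by
      rw [Fintype.card_sigma, Fintype.card_sigma]
      simp only [Fintype.card_fin]
      simp only [bsf, btf]
      rw [← Finset.sum_filter, ← Finset.sum_filter]
      exact heq.symm
    have hfbij : Function.Bijective f :=
      (Fintype.bijective_iff_injective_and_card f).mpr ⟨hfinj, hcardι⟩
    refine ⟨fun u v =>
      (univ.filter (fun q : Σ w : V, Fin (btf D b w) => q.1 = v ∧ (f q).1 = u)).card, ?_, ?_⟩
    · intro u v hD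
      rw [Finset.card_eq_zero, Finset.filter_eq_empty_iff]
      intro q _ h
      exact hD (by rw [← h.1, ← h.2]; exact hfD q)
    · intro v
      rw [Finset.sum_add_distrib]
      have h1 : (∑ u, (univ.filter
            (fun q : Σ w : V, Fin (btf D b w) => q.1 = v ∧ (f q).1 = u)).card)
          = (univ.filter (fun q : Σ w : V, Fin (btf D b w) => q.1 = v)).card := by
        rw [Finset.card_eq_sum_card_fiberwise
          (f := fun q : Σ w : V, Fin (btf D b w) => (f q).1) (t := univ)
          (fun q _ => Finset.mem_univ _)]
        exact (Finset.sum_congr rfl fun u _ => by rw [Finset.filter_filter]).symm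
      have h2 : (univ.filter (fun q : Σ w : V, Fin (btf D b w) => q.1 = v)).card
          = btf D b v := by
        have he : (univ.filter (fun q : Σ w : V, Fin (btf D b w) => q.1 = v))
            = univ.filter (fun q : Σ w : V, Fin (btf D b w) => q.1 ∈ ({v} : Finset V)) := by
          ext q; simp
        rw [he, aux_sigma_card, Finset.sum_singleton]
      have h3 : (∑ u, (univ.filter
            (fun q : Σ w : V, Fin (btf D b w) => q.1 = u ∧ (f q).1 = v)).card)
          = (univ.filter (fun q : Σ w : V, Fin (btf D b w) => (f q).1 = v)).card := by
        rw [Finset.card_eq_sum_card_fiberwise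
          (f := fun q : Σ w : V, Fin (btf D b w) => q.1) (t := univ)
          (fun q _ => Finset.mem_univ _)]
        refine (Finset.sum_congr rfl fun u _ => ?_).symm
        rw [Finset.filter_filter]
        congr 1
        ext q
        simp only [Finset.mem_filter, Finset.mem_univ, true_and]
        exact and_comm
      have h4 : (univ.filter (fun q : Σ w : V, Fin (btf D b w) => (f q).1 = v)).card
          = (univ.filter (fun p : Σ w : V, Fin (bsf D b w) => p.1 = v)).card := by
        rw [← Fintype.card_subtype, ← Fintype.card_subtype]
        exact Fintype.card_congr ((Equiv.ofBijective f hfbij).subtypeEquiv fun q => Iff.rfl)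
      have h5 : (univ.filter (fun p : Σ w : V, Fin (bsf D b w) => p.1 = v)).card
          = bsf D b v := by
        have he : (univ.filter (fun p : Σ w : V, Fin (bsf D b w) => p.1 = v))
            = univ.filter (fun p : Σ w : V, Fin (bsf D b w) => p.1 ∈ ({v} : Finset V)) := by
          ext p; simp
        rw [he, aux_sigma_card, Finset.sum_singleton]
      rw [h1, h2, h3, h4, h5]
      rcases hbip v with h | h
      · have hvt : ¬ (∀ u, ¬ D v u) := fun h' => hnotboth v ⟨h, h'⟩
        show (if (∀ u, ¬ D v u) then b v else 0) + (if (∀ u, ¬ D u v) then b v else 0) = b v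
        rw [if_neg hvt, if_pos h, zero_add]
      · have hvs : ¬ (∀ u, ¬ D u v) := fun h' => hnotboth v ⟨h', h⟩
        show (if (∀ u, ¬ D v u) then b v else 0) + (if (∀ u, ¬ D u v) then b v else 0) = b v
        rw [if_pos h, if_neg hvs, add_zero]
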